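/- Let N = 1 and write W = W₁. For every Schwartz function ψ ∈ 𝒮(ℝ, ℂ): 𝒬₁(e^{2πiy})(Wψ) = W(Bψ) where (Bψ)(t) = ψ(t+1) − ψ'(t+1), and 𝒬₁(e^{−2πiy})(Wψ) = W(B†ψ) where (B†ψ)(t) = ψ(t−1) + ψ'(t−1). -/

import Mathlib

noncomputable section

/-- Partial derivative in the first variable. -/
def pdx (φ : ℝ × ℝ → ℂ) (p : ℝ × ℝ) : ℂ := fderiv ℝ φ p (1, 0)

/-- Partial derivative in the second variable. -/
def pdy (φ : ℝ × ℝ → ℂ) (p : ℝ × ℝ) : ℂ := fderiv ℝ φ p (0, 1)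

/-- The prequantization map `𝒬_N` of the torus, acting on functions on `ℝ²`. -/
def Q (N : ℤ) (f : ℝ × ℝ → ℂ) (φ : ℝ × ℝ → ℂ) : ℝ × ℝ → ℂ := fun p =>
  (1 / (2 * (Real.pi : ℂ) * Complex.I * (N : ℂ))) *
      (pdx f p * (pdy φ p - 2 * (Real.pi : ℂ) * Complex.I * (N : ℂ) * (p.1 : ℂ) * φ p) -
        pdy f p * pdx φ p) +
    f p * φ p

/-- The Weil–Brezin–Zak transform `(W_N ψ)(x,y) = Σ_{k∈ℤ} ψ(x+k) e^{−2πiNky}`. -/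
def WBZ (N : ℤ) (ψ : ℝ → ℂ) : ℝ × ℝ → ℂ := fun p =>
  ∑' k : ℤ, ψ (p.1 + k) * Complex.exp (-(2 * (Real.pi : ℂ) * Complex.I * (N : ℂ) * (k : ℂ) * (p.2 : ℂ)))

open Complex ContinuousLinearMap Metric

namespace WBZaux

lemma expDeriv (c : ℂ) (y : ℝ) :
    HasDerivAt (fun y : ℝ => Complex.exp (c * y)) (Complex.exp (c * y) * c) y := by
  have h1 : HasDerivAt (fun z : ℂ => Complex.exp (c * z)) (Complex.exp (c * y) * c) (y : ℂ) := by
    simpa [Function.comp_def] using ((Complex.hasDerivAt_exp (c * y)).comp (y:ℂ) ((hasDerivAt_id (y:ℂ)).const_mul c))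
  exact h1.comp_ofReal

lemma comp_deriv {p : ℝ × ℝ} {g : ℝ → ℂ} {a : ℂ} {f : ℝ × ℝ → ℝ} {f' : (ℝ × ℝ) →L[ℝ] ℝ}
    (hg : HasDerivAt g a (f p)) (hf : HasFDerivAt f f' p) :
    HasFDerivAt (fun q => g (f q)) (f'.smulRight a) p := by
  have h := (hasDerivAt_iff_hasFDerivAt.1 hg).comp p hf
  exact h

lemma expFDeriv (c : ℂ) (p : ℝ × ℝ) :
    HasFDerivAt (fun q : ℝ × ℝ => Complex.exp (c * q.2))
      ((ContinuousLinearMap.snd ℝ ℝ ℝ).smulRight (Complex.exp (c * p.2) * c)) p :=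
  comp_deriv (expDeriv c p.2) hasFDerivAt_snd

lemma pdx_exp (c : ℂ) (p : ℝ × ℝ) :
    pdx (fun q : ℝ × ℝ => Complex.exp (c * q.2)) p = 0 := by
  rw [pdx, (expFDeriv c p).fderiv]
  simp

lemma pdy_exp (c : ℂ) (p : ℝ × ℝ) :
    pdy (fun q : ℝ × ℝ => Complex.exp (c * q.2)) p = Complex.exp (c * p.2) * c := by
  rw [pdy, (expFDeriv c p).fderiv]
  simp

lemma norm_exp_int (k : ℤ) (y : ℝ) :
    ‖Complex.exp (-(2 * (Real.pi : ℂ) * I * (k : ℂ)) * y)‖ = 1 := by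
  have h : (-(2 * (Real.pi : ℂ) * I * (k : ℂ)) * (y : ℂ))
      = ((-(2 * Real.pi * (k : ℝ) * y) : ℝ) : ℂ) * I := by push_cast; ring
  rw [h, Complex.norm_exp_ofReal_mul_I]

lemma norm_coeff (k : ℤ) :
    ‖(-(2 * (Real.pi : ℂ) * I * (k : ℂ)))‖ = 2 * Real.pi * |(k : ℝ)| := by
  have h : (-(2 * (Real.pi : ℂ) * I * (k : ℂ))) = ((-(2 * Real.pi * (k : ℝ)) : ℝ) : ℂ) * I := by
    push_cast; ring
  rw [h, norm_mul, Complex.norm_I, mul_one, Complex.norm_real, Real.norm_eq_abs, abs_neg, abs_mul]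
  rw [_root_.abs_of_nonneg (by positivity : (0:ℝ) ≤ 2 * Real.pi)]

lemma decay4 (g : SchwartzMap ℝ ℂ) : ∃ C, 0 ≤ C ∧ ∀ t : ℝ, (1 + |t| ^ 4) * ‖g t‖ ≤ C := by
  refine ⟨SchwartzMap.seminorm ℝ 0 0 g + SchwartzMap.seminorm ℝ 4 0 g,
    by positivity, fun t => ?_⟩
  have h0 := SchwartzMap.norm_le_seminorm ℝ g t
  have h4 := SchwartzMap.norm_pow_mul_le_seminorm ℝ g 4 t
  rw [Real.norm_eq_abs] at h4
  nlinarith [norm_nonneg (g t)]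

lemma master (g : SchwartzMap ℝ ℂ) (R : ℝ) (hR : 0 ≤ R) :
    ∃ A, 0 ≤ A ∧ ∀ (k : ℤ) (x : ℝ), |x| ≤ R →
      (1 + 2 * Real.pi * |(k : ℝ)|) * ‖g (x + k)‖ ≤ A * (1 / (1 + (k : ℝ) ^ 2)) := by
  obtain ⟨C, hC0, hC⟩ := decay4 g
  refine ⟨64 * (1 + R) ^ 3 * C, by positivity, fun k x hx => ?_⟩
  set t := x + (k : ℝ) with ht
  set a := |t| with ha'
  set b := |(k : ℝ)| with hb'
  have ha : 0 ≤ a := abs_nonneg _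
  have hb : 0 ≤ b := abs_nonneg _
  have h1 : b ≤ a + R := by
    have hk : (k : ℝ) = t - x := by rw [ht]; ring
    calc b = |t - x| := by rw [hb', hk]
    _ ≤ |t| + |x| := by rw [sub_eq_add_neg]; exact (abs_add_le t (-x)).trans (by rw [abs_neg])
    _ ≤ a + R := by rw [ha']; linarith
  have hgt := hC t
  have hb2 : (1 : ℝ) + (k : ℝ) ^ 2 = 1 + b ^ 2 := by rw [hb', _root_.sq_abs]
  rw [mul_one_div, hb2, le_div_iff₀ (by positivity)]
  have e1 : 1 + 2 * Real.pi * b ≤ 8 * (1 + b) := by nlinarith [Real.pi_le_four]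
  have e2 : (1 + b) * (1 + b ^ 2) ≤ (1 + b) ^ 3 := by nlinarith
  have e3 : 1 + b ≤ (1 + R) * (1 + a) := by nlinarith
  have e4 : (1 + b) ^ 3 ≤ ((1 + R) * (1 + a)) ^ 3 := pow_le_pow_left₀ (by linarith) e3 3
  have e5 : (1 + a) ^ 3 ≤ 8 * (1 + a ^ 4) := by
    rcases le_total a 1 with h | h
    · nlinarith [pow_le_pow_left₀ (by linarith : (0:ℝ) ≤ 1 + a) (by linarith : 1 + a ≤ 2) 3,
        pow_nonneg ha 4]
    · have h8 : (1 + a) ^ 3 ≤ (2 * a) ^ 3 := pow_le_pow_left₀ (by linarith) (by linarith) 3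
      have h9 : a ^ 3 ≤ a ^ 4 := pow_le_pow_right₀ h (by norm_num)
      nlinarith
  have key : (1 + 2 * Real.pi * b) * (1 + b ^ 2) ≤ 64 * (1 + R) ^ 3 * (1 + a ^ 4) := by
    calc (1 + 2 * Real.pi * b) * (1 + b ^ 2) ≤ (8 * (1 + b)) * (1 + b ^ 2) :=
          mul_le_mul_of_nonneg_right e1 (by positivity)
    _ = 8 * ((1 + b) * (1 + b ^ 2)) := by ring
    _ ≤ 8 * (1 + b) ^ 3 := by linarith
    _ ≤ 8 * ((1 + R) * (1 + a)) ^ 3 := by linarith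
    _ = (1 + R) ^ 3 * (8 * (1 + a) ^ 3) := by ring
    _ ≤ (1 + R) ^ 3 * (8 * (8 * (1 + a ^ 4))) := by
        have := mul_le_mul_of_nonneg_left e5 (by norm_num : (0:ℝ) ≤ 8)
        exact mul_le_mul_of_nonneg_left this (by positivity)
    _ = 64 * (1 + R) ^ 3 * (1 + a ^ 4) := by ring
  calc (1 + 2 * Real.pi * b) * ‖g t‖ * (1 + b ^ 2)
      = ((1 + 2 * Real.pi * b) * (1 + b ^ 2)) * ‖g t‖ := by ring
  _ ≤ (64 * (1 + R) ^ 3 * (1 + a ^ 4)) * ‖g t‖ :=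
      mul_le_mul_of_nonneg_right key (norm_nonneg _)
  _ = (64 * (1 + R) ^ 3) * ((1 + a ^ 4) * ‖g t‖) := by ring
  _ ≤ (64 * (1 + R) ^ 3) * C := mul_le_mul_of_nonneg_left hgt (by positivity)

set_option maxHeartbeats 800000 in
lemma summable_base : Summable (fun k : ℤ => 1 / (1 + (k : ℝ) ^ 2)) := by
  have h2 : Summable fun n : ℕ => 1 / ((n : ℝ) + 1) ^ 2 := by
    have h := (summable_nat_add_iff (f := fun n : ℕ => 1 / (n : ℝ) ^ 2) 1).mpr
      (Real.summable_one_div_nat_pow.mpr one_lt_two)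
    exact h.congr fun n => by push_cast; ring
  have hnat : Summable fun n : ℕ => 1 / (1 + (n : ℝ) ^ 2) := by
    apply Summable.of_nonneg_of_le (fun n => by positivity)
      (fun n => ?_) (h2.mul_left 2)
    have hle : ((n : ℝ) + 1) ^ 2 ≤ 2 * (1 + (n : ℝ) ^ 2) := by nlinarith [sq_nonneg ((n:ℝ) - 1)]
    rw [mul_one_div, ← mul_one_div (2:ℝ), mul_one_div, div_le_div_iff₀ (by positivity) (by positivity)]
    nlinarith
  apply Summable.of_nat_of_neg hnat
  exact hnat.congr fun n => by push_cast; norm_num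

lemma summable_decay (g : SchwartzMap ℝ ℂ) (x : ℝ) (v : ℤ → ℂ) (hv : ∀ k, ‖v k‖ ≤ 1) :
    Summable fun k : ℤ => g (x + k) * v k := by
  obtain ⟨A, hA0, hA⟩ := master g |x| (abs_nonneg x)
  apply Summable.of_norm_bounded (g := fun k : ℤ => A * (1 / (1 + (k : ℝ) ^ 2))) (summable_base.mul_left A)
  intro k
  have h1 : ‖g (x + k) * v k‖ ≤ ‖g (x + k)‖ := by
    rw [norm_mul]
    calc ‖g (x + k)‖ * ‖v k‖ ≤ ‖g (x + k)‖ * 1 :=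
      mul_le_mul_of_nonneg_left (hv k) (norm_nonneg _)
    _ = ‖g (x + k)‖ := mul_one _
  have h2 : ‖g (x + k)‖ ≤ (1 + 2 * Real.pi * |(k : ℝ)|) * ‖g (x + k)‖ := by
    nlinarith [mul_nonneg (by positivity : (0:ℝ) ≤ 2 * Real.pi * |(k:ℝ)|) (norm_nonneg (g (x + (k:ℝ))))]
  exact h1.trans (h2.trans (hA k x (le_refl _)))

lemma WBZ_eq (φ : ℝ → ℂ) : WBZ 1 φ =
    fun p : ℝ × ℝ => ∑' k : ℤ, φ (p.1 + k) *
      Complex.exp (-(2 * (Real.pi : ℂ) * I * (k : ℂ)) * p.2) := by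
  funext p
  unfold WBZ
  apply tsum_congr
  intro k
  congr 2
  push_cast
  ring

set_option maxHeartbeats 1600000 in
lemma pdx_WBZ (ψ : SchwartzMap ℝ ℂ) (p : ℝ × ℝ) :
    pdx (WBZ 1 ⇑ψ) p = ∑' k : ℤ,
      Complex.exp (-(2 * (Real.pi : ℂ) * I * (k : ℂ)) * p.2) * deriv (⇑ψ) (p.1 + k) := by
  set f : ℤ → ℝ × ℝ → ℂ := fun k q =>
    ψ (q.1 + k) * Complex.exp (-(2 * (Real.pi : ℂ) * I * (k : ℂ)) * q.2) with hf_def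
  set F' : ℤ → ℝ × ℝ → (ℝ × ℝ) →L[ℝ] ℂ := fun k q =>
    ψ (q.1 + k) • ((ContinuousLinearMap.snd ℝ ℝ ℝ).smulRight
      (Complex.exp (-(2 * (Real.pi : ℂ) * I * (k : ℂ)) * q.2) * (-(2 * (Real.pi : ℂ) * I * (k : ℂ))))) +
    Complex.exp (-(2 * (Real.pi : ℂ) * I * (k : ℂ)) * q.2) •
      ((ContinuousLinearMap.fst ℝ ℝ ℝ).smulRight (deriv (⇑ψ) (q.1 + k))) with hF'_def
  have hasF : ∀ (k : ℤ) (q : ℝ × ℝ), HasFDerivAt (f k) (F' k q) q := by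
    intro k q
    have hA : HasFDerivAt (fun q : ℝ × ℝ => (ψ (q.1 + k) : ℂ))
        ((ContinuousLinearMap.fst ℝ ℝ ℝ).smulRight (deriv (⇑ψ) (q.1 + k))) q :=
      comp_deriv (ψ.differentiableAt.hasDerivAt) (hasFDerivAt_fst.add_const _)
    exact hA.mul (expFDeriv (-(2 * (Real.pi : ℂ) * I * (k : ℂ))) q)
  obtain ⟨A₁, hA₁0, hA₁⟩ := master ψ (|p.1| + 1) (by positivity)
  obtain ⟨A₂, hA₂0, hA₂⟩ := master (SchwartzMap.derivCLM ℝ ℂ ψ) (|p.1| + 1) (by positivity)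
  simp only [SchwartzMap.derivCLM_apply] at hA₂
  set u : ℤ → ℝ := fun k => (A₁ + A₂) * (1 / (1 + (k : ℝ) ^ 2)) with hu_def
  have hu : Summable u := summable_base.mul_left _
  have hband : ∀ (k : ℤ) (q : ℝ × ℝ), q ∈ ball p 1 → ‖F' k q‖ ≤ u k := by
    intro k q hq
    have hx : |q.1| ≤ |p.1| + 1 := by
      have h1 : dist q.1 p.1 ≤ dist q p := by
        rw [Prod.dist_eq]; exact le_max_left _ _
      have h2 : dist q p < 1 := mem_ball.mp hq
      have h3 := abs_sub_abs_le_abs_sub q.1 p.1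
      rw [Real.dist_eq] at h1
      linarith
    have hb1 : ‖F' k q‖ ≤ ‖ψ (q.1 + k)‖ * (2 * Real.pi * |(k : ℝ)|) + ‖deriv (⇑ψ) (q.1 + k)‖ := by
      simp only [hF'_def]
      refine (norm_add_le _ _).trans ?_
      have n1 := norm_smul_le (ψ (q.1 + k) : ℂ) ((ContinuousLinearMap.snd ℝ ℝ ℝ).smulRight
        (Complex.exp (-(2 * (Real.pi : ℂ) * I * (k : ℂ)) * q.2) * (-(2 * (Real.pi : ℂ) * I * (k : ℂ)))))
      have n2 := norm_smul_le (Complex.exp (-(2 * (Real.pi : ℂ) * I * (k : ℂ)) * q.2))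
        ((ContinuousLinearMap.fst ℝ ℝ ℝ).smulRight (deriv (⇑ψ) (q.1 + k)))
      have hs1 : ‖(ContinuousLinearMap.snd ℝ ℝ ℝ).smulRight
          (Complex.exp (-(2 * (Real.pi : ℂ) * I * (k : ℂ)) * q.2) * (-(2 * (Real.pi : ℂ) * I * (k : ℂ))))‖
          ≤ 2 * Real.pi * |(k : ℝ)| := by
        rw [ContinuousLinearMap.norm_smulRight_apply, norm_mul, norm_exp_int, norm_coeff, one_mul]
        calc ‖ContinuousLinearMap.snd ℝ ℝ ℝ‖ * (2 * Real.pi * |(k : ℝ)|)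
            ≤ 1 * (2 * Real.pi * |(k : ℝ)|) :=
          mul_le_mul_of_nonneg_right (ContinuousLinearMap.norm_snd_le ℝ ℝ ℝ : ‖ContinuousLinearMap.snd ℝ ℝ ℝ‖ ≤ 1) (by positivity)
        _ = 2 * Real.pi * |(k : ℝ)| := one_mul _
      have hs2 : ‖(ContinuousLinearMap.fst ℝ ℝ ℝ).smulRight (deriv (⇑ψ) (q.1 + k))‖
          ≤ ‖deriv (⇑ψ) (q.1 + k)‖ := by
        rw [ContinuousLinearMap.norm_smulRight_apply]
        calc ‖ContinuousLinearMap.fst ℝ ℝ ℝ‖ * ‖deriv (⇑ψ) (q.1 + k)‖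
            ≤ 1 * ‖deriv (⇑ψ) (q.1 + k)‖ :=
          mul_le_mul_of_nonneg_right (ContinuousLinearMap.norm_fst_le ℝ ℝ ℝ : ‖ContinuousLinearMap.fst ℝ ℝ ℝ‖ ≤ 1) (norm_nonneg _)
        _ = ‖deriv (⇑ψ) (q.1 + k)‖ := one_mul _
      have hexp1 : ‖Complex.exp (-(2 * (Real.pi : ℂ) * I * (k : ℂ)) * q.2)‖ = 1 :=
        norm_exp_int k q.2
      rw [hexp1, one_mul] at n2
      have h5 := mul_le_mul_of_nonneg_left hs1 (norm_nonneg (ψ (q.1 + k) : ℂ))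
      nlinarith [norm_nonneg ((ContinuousLinearMap.snd ℝ ℝ ℝ).smulRight
        (Complex.exp (-(2 * (Real.pi : ℂ) * I * (k : ℂ)) * q.2) * (-(2 * (Real.pi : ℂ) * I * (k : ℂ))))),
        norm_nonneg (ψ (q.1 + k) : ℂ)]
    have hk1 := hA₁ k q.1 hx
    have hk2 := hA₂ k q.1 hx
    have hn1 : 0 ≤ ‖ψ (q.1 + (k:ℝ))‖ := norm_nonneg _
    have hn2 : 0 ≤ ‖deriv (⇑ψ) (q.1 + (k:ℝ))‖ := norm_nonneg _
    have hpk : (0:ℝ) ≤ 2 * Real.pi * |(k : ℝ)| := by positivity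
    rw [hu_def]
    simp only []
    have : (A₁ + A₂) * (1 / (1 + (k : ℝ) ^ 2)) =
        A₁ * (1 / (1 + (k : ℝ) ^ 2)) + A₂ * (1 / (1 + (k : ℝ) ^ 2)) := by ring
    rw [this]
    nlinarith
  have hf0 : Summable (fun k => f k p) := by
    simp only [hf_def]
    exact summable_decay ψ p.1 _ (fun k => le_of_eq (norm_exp_int k p.2))
  have hW : HasFDerivAt (fun q => ∑' k, f k q) (∑' k, F' k p) p :=
    hasFDerivAt_tsum_of_isPreconnected hu isOpen_ball (convex_ball p 1).isPreconnected
      (fun k q _ => hasF k q) hband (mem_ball_self one_pos) hf0 (mem_ball_self one_pos)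
  have hsum' : Summable fun k => F' k p :=
    Summable.of_norm_bounded hu fun k => hband k p (mem_ball_self one_pos)
  have hWeq : WBZ 1 ⇑ψ = fun q => ∑' k, f k q := WBZ_eq ⇑ψ
  rw [hWeq, pdx, hW.fderiv]
  have hev : (∑' k, F' k p) ((1:ℝ), (0:ℝ)) = ∑' k, (F' k p) ((1:ℝ), (0:ℝ)) := by
    have h := (ContinuousLinearMap.apply ℝ ℂ ((1:ℝ), (0:ℝ))).map_tsum hsum'
    simpa using h
  rw [hev]
  apply tsum_congr
  intro k
  simp only [hF'_def]
  simp [ContinuousLinearMap.smulRight_apply, smul_eq_mul]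

end WBZaux

open WBZaux

/-- Under the Weil–Brezin–Zak transform (with `N = 1`), `𝒬₁(e^{±2πiy})` go over to
the operators `B` and `B†` on `L²(ℝ, ℂ)`:
`(Bψ)(t) = ψ(t+1) − ψ'(t+1)`, `(B†ψ)(t) = ψ(t−1) + ψ'(t−1)`. -/
theorem wbz_intertwines_B (ψ : SchwartzMap ℝ ℂ) :
    Q 1 (fun q => Complex.exp (2 * (Real.pi : ℂ) * Complex.I * (q.2 : ℂ))) (WBZ 1 ⇑ψ) =
        WBZ 1 (fun t : ℝ => ψ (t + 1) - deriv (⇑ψ) (t + 1)) ∧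
    Q 1 (fun q => Complex.exp (-(2 * (Real.pi : ℂ) * Complex.I * (q.2 : ℂ)))) (WBZ 1 ⇑ψ) =
        WBZ 1 (fun t : ℝ => ψ (t - 1) + deriv (⇑ψ) (t - 1)) := by
  have h2πI : (2 * (Real.pi : ℂ) * Complex.I) ≠ 0 :=
    mul_ne_zero (mul_ne_zero two_ne_zero (Complex.ofReal_ne_zero.mpr Real.pi_ne_zero))
      Complex.I_ne_zero
  refine ⟨funext fun p => ?_, funext fun p => ?_⟩
  · have hT : Summable (fun k : ℤ =>
        (ψ (p.1 + k) : ℂ) * Complex.exp (-(2 * (Real.pi:ℂ) * I * (k:ℂ)) * p.2)) :=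
      summable_decay ψ p.1 _ (fun k => le_of_eq (norm_exp_int k p.2))
    have hT' : Summable (fun k : ℤ =>
        Complex.exp (-(2 * (Real.pi:ℂ) * I * (k:ℂ)) * p.2) * deriv (⇑ψ) (p.1 + k)) := by
      refine (summable_decay (SchwartzMap.derivCLM ℝ ℂ ψ) p.1 _
        (fun k => le_of_eq (norm_exp_int k p.2))).congr fun k => ?_
      simp [SchwartzMap.derivCLM_apply, mul_comm]
    simp only [Q]
    rw [pdx_exp, pdy_exp, pdx_WBZ]
    simp only [WBZ_eq ⇑ψ, WBZ_eq (fun t : ℝ => ψ (t + 1) - deriv (⇑ψ) (t + 1))]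
    trans (Complex.exp (2 * (Real.pi:ℂ) * Complex.I * p.2) *
        ∑' k : ℤ, (ψ (p.1 + k) : ℂ) * Complex.exp (-(2 * (Real.pi:ℂ) * I * (k:ℂ)) * p.2)
      - Complex.exp (2 * (Real.pi:ℂ) * Complex.I * p.2) *
        ∑' k : ℤ, Complex.exp (-(2 * (Real.pi:ℂ) * I * (k:ℂ)) * p.2) * deriv (⇑ψ) (p.1 + k))
    · push_cast
      field_simp
      ring
    · rw [← tsum_mul_left, ← tsum_mul_left, ← (hT.mul_left _).tsum_sub (hT'.mul_left _)]
      rw [← Equiv.tsum_eq (Equiv.addRight (1:ℤ)) (fun k : ℤ =>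
        Complex.exp (2 * (Real.pi:ℂ) * Complex.I * p.2) *
          ((ψ (p.1 + k) : ℂ) * Complex.exp (-(2 * (Real.pi:ℂ) * I * (k:ℂ)) * p.2))
        - Complex.exp (2 * (Real.pi:ℂ) * Complex.I * p.2) *
          (Complex.exp (-(2 * (Real.pi:ℂ) * I * (k:ℂ)) * p.2) * deriv (⇑ψ) (p.1 + k)))]
      simp only [Equiv.coe_addRight]
      apply tsum_congr
      intro k
      have harg : p.1 + (((k + 1) : ℤ) : ℝ) = p.1 + (k : ℝ) + 1 := by push_cast; ring
      have hexp : Complex.exp (2 * (Real.pi:ℂ) * Complex.I * p.2) *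
          Complex.exp (-(2 * (Real.pi:ℂ) * I * (((k + 1) : ℤ):ℂ)) * p.2)
          = Complex.exp (-(2 * (Real.pi:ℂ) * I * (k:ℂ)) * p.2) := by
        rw [← Complex.exp_add]
        congr 1
        push_cast
        ring
      rw [harg, ← hexp]
      ring
  · have hT : Summable (fun k : ℤ =>
        (ψ (p.1 + k) : ℂ) * Complex.exp (-(2 * (Real.pi:ℂ) * I * (k:ℂ)) * p.2)) :=
      summable_decay ψ p.1 _ (fun k => le_of_eq (norm_exp_int k p.2))
    have hT' : Summable (fun k : ℤ =>
        Complex.exp (-(2 * (Real.pi:ℂ) * I * (k:ℂ)) * p.2) * deriv (⇑ψ) (p.1 + k)) := by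
      refine (summable_decay (SchwartzMap.derivCLM ℝ ℂ ψ) p.1 _
        (fun k => le_of_eq (norm_exp_int k p.2))).congr fun k => ?_
      simp [SchwartzMap.derivCLM_apply, mul_comm]
    have hfun : (fun q : ℝ × ℝ => Complex.exp (-(2 * (Real.pi:ℂ) * Complex.I * (q.2:ℂ))))
        = fun q : ℝ × ℝ => Complex.exp ((-(2 * (Real.pi:ℂ) * Complex.I)) * (q.2:ℂ)) := by
      funext q
      rw [neg_mul]
    rw [hfun]
    simp only [Q]
    rw [pdx_exp, pdy_exp, pdx_WBZ]
    simp only [WBZ_eq ⇑ψ, WBZ_eq (fun t : ℝ => ψ (t - 1) + deriv (⇑ψ) (t - 1))]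
    trans (Complex.exp ((-(2 * (Real.pi:ℂ) * Complex.I)) * p.2) *
        ∑' k : ℤ, (ψ (p.1 + k) : ℂ) * Complex.exp (-(2 * (Real.pi:ℂ) * I * (k:ℂ)) * p.2)
      + Complex.exp ((-(2 * (Real.pi:ℂ) * Complex.I)) * p.2) *
        ∑' k : ℤ, Complex.exp (-(2 * (Real.pi:ℂ) * I * (k:ℂ)) * p.2) * deriv (⇑ψ) (p.1 + k))
    · push_cast
      field_simp
      ring
    · rw [← tsum_mul_left, ← tsum_mul_left, ← (hT.mul_left _).tsum_add (hT'.mul_left _)]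
      rw [← Equiv.tsum_eq (Equiv.subRight (1:ℤ)) (fun k : ℤ =>
        Complex.exp ((-(2 * (Real.pi:ℂ) * Complex.I)) * p.2) *
          ((ψ (p.1 + k) : ℂ) * Complex.exp (-(2 * (Real.pi:ℂ) * I * (k:ℂ)) * p.2))
        + Complex.exp ((-(2 * (Real.pi:ℂ) * Complex.I)) * p.2) *
          (Complex.exp (-(2 * (Real.pi:ℂ) * I * (k:ℂ)) * p.2) * deriv (⇑ψ) (p.1 + k)))]
      simp only [Equiv.subRight_apply]
      apply tsum_congr
      intro k
      have harg : p.1 + (((k - 1) : ℤ) : ℝ) = p.1 + (k : ℝ) - 1 := by push_cast; ring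
      have hexp : Complex.exp ((-(2 * (Real.pi:ℂ) * Complex.I)) * p.2) *
          Complex.exp (-(2 * (Real.pi:ℂ) * I * (((k - 1) : ℤ):ℂ)) * p.2)
          = Complex.exp (-(2 * (Real.pi:ℂ) * I * (k:ℂ)) * p.2) := by
        rw [← Complex.exp_add]
        congr 1
        push_cast
        ring
      rw [harg, ← hexp]
      ring
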